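/- Let U : Set F → ℝ be a monotone submodular function with U(∅) = 0 on a finite ground set F, and let m ≥ 1. Construct greedily G_0 = ∅ and G_{i+1} = G_i ∪ {g_{i+1}} where g_{i+1} ∈ F maximizes U(G_i ∪ {g}) - U(G_i) over g ∈ F. Then U(G_m) ≥ (1 - (1 - 1/m)^m) · max{U(A) : A ⊆ F, |A| ≤ m}. -/

import Mathlib

lemma marginal_sum {F : Type*} [DecidableEq F]
    (U : Finset F → ℝ)
    (submod : ∀ A B : Finset F, A ⊆ B → ∀ s : F,
      U (insert s A) - U A ≥ U (insert s B) - U B)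
    (B : Finset F) (S : Finset F) :
    U (B ∪ S) - U B ≤ ∑ s ∈ S, (U (insert s B) - U B) := by
  induction S using Finset.induction_on with
  | empty => simp
  | insert _ _ hs ih =>
    rename_i s S
    rw [Finset.sum_insert hs]
    have h1 : B ∪ insert s S = insert s (B ∪ S) := by
      ext x; simp [or_comm, or_left_comm]
    have h2 := submod B (B ∪ S) Finset.subset_union_left s
    rw [h1]
    linarith

theorem greedy_guarantee {F : Type*} [Fintype F] [Nonempty F] [DecidableEq F]
    (U : Finset F → ℝ)
    (mono : ∀ A B : Finset F, A ⊆ B → U A ≤ U B)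
    (submod : ∀ A B : Finset F, A ⊆ B → ∀ s : F,
      U (insert s A) - U A ≥ U (insert s B) - U B)
    (hempty : U ∅ = 0)
    (m : ℕ) (hm : 1 ≤ m)
    (G : ℕ → Finset F) (hG0 : G 0 = ∅)
    (hGstep : ∀ i : ℕ, ∃ g : F, G (i + 1) = insert g (G i) ∧
      ∀ g' : F, U (insert g' (G i)) - U (G i) ≤ U (insert g (G i)) - U (G i)) :
    ∀ A : Finset F, A.card ≤ m →
      (1 - (1 - 1 / (m : ℝ)) ^ m) * U A ≤ U (G m) := by
  intro A hA
  have hmpos : (0:ℝ) < m := by exact_mod_cast hm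
  have key : ∀ i, U A - U (G i) ≤ m * (U (G (i+1)) - U (G i)) := by
    intro i
    obtain ⟨g, hg, hmax⟩ := hGstep i
    have hδ : 0 ≤ U (G (i+1)) - U (G i) := by
      rw [hg]
      have := mono (G i) (insert g (G i)) (Finset.subset_insert g (G i))
      linarith
    have hsum := marginal_sum U submod (G i) A
    have h1 : U A ≤ U (G i ∪ A) := mono A _ Finset.subset_union_right
    have h2 : ∑ s ∈ A, (U (insert s (G i)) - U (G i))
        ≤ A.card • (U (G (i+1)) - U (G i)) := by
      apply Finset.sum_le_card_nsmul
      intro x _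
      rw [hg]
      exact hmax x
    rw [nsmul_eq_mul] at h2
    have h3 : (A.card : ℝ) * (U (G (i+1)) - U (G i))
        ≤ (m : ℝ) * (U (G (i+1)) - U (G i)) := by
      apply mul_le_mul_of_nonneg_right _ hδ
      exact_mod_cast hA
    linarith
  have h1m : (0:ℝ) ≤ 1 - 1/(m:ℝ) := by
    rw [sub_nonneg, div_le_one hmpos]
    exact_mod_cast hm
  have ind : ∀ i, U A - U (G i) ≤ (1 - 1/(m:ℝ))^i * U A := by
    intro i
    induction i with
    | zero => simp [hG0, hempty]
    | succ i ih =>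
      have hk := key i
      have hdiv : (U A - U (G i))/(m:ℝ) ≤ U (G (i+1)) - U (G i) := by
        rw [div_le_iff₀ hmpos]; linarith
      have e : (1 - 1/(m:ℝ)) * (U A - U (G i))
          = (U A - U (G i)) - (U A - U (G i))/(m:ℝ) := by
        field_simp
      have step : U A - U (G (i+1)) ≤ (1 - 1/(m:ℝ)) * (U A - U (G i)) := by
        rw [e]; linarith
      calc U A - U (G (i+1)) ≤ (1 - 1/(m:ℝ)) * (U A - U (G i)) := step
        _ ≤ (1 - 1/(m:ℝ)) * ((1 - 1/(m:ℝ))^i * U A) :=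
            mul_le_mul_of_nonneg_left ih h1m
        _ = (1 - 1/(m:ℝ))^(i+1) * U A := by ring
  have hfin := ind m
  nlinarith [hfin]
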